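/- Let M be a matroid on a finite ground set E, let C be a cocircuit of M, let v ∈ C, and let ℓ ≥ 2. Then SF_ℓ(J(M)) : x_C = SF_{ℓ−1}(J(M ⧸ {v}) : x_C) = SF_{ℓ−1}(J((M ⧸ {v}) ⧹ (C \ {v}))). -/

import Mathlib

open Matroid MvPolynomial

/-- The squarefree monomial `x_S = ∏_{i ∈ S} x_i`. -/
noncomputable def xS {α : Type*} [Fintype α] (K : Type*) [Field K] (S : Set α) :
    MvPolynomial α K :=
  ∏ i ∈ S.toFinite.toFinset, MvPolynomial.X i

/-- The monomial `x^γ = ∏ i, x_i ^ γ(i)`. -/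
noncomputable def xPow {α : Type*} [Fintype α] (K : Type*) [Field K] (γ : α → ℕ) :
    MvPolynomial α K :=
  ∏ i : α, (MvPolynomial.X i : MvPolynomial α K) ^ γ i

/-- `p_S`: the ideal of `K[x_i : i ∈ α]` generated by the variables `x_i`, `i ∈ S`. -/
noncomputable def pS {α : Type*} (K : Type*) [Field K] (S : Set α) :
    Ideal (MvPolynomial α K) :=
  Ideal.span (MvPolynomial.X '' S)

/-- The cover ideal `J(M) = ⋂_{F basis of M} p_F` of a matroid `M`. -/
noncomputable def coverIdeal {α : Type*} [Fintype α] (K : Type*) [Field K] (M : Matroid α) :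
    Ideal (MvPolynomial α K) :=
  ⨅ F ∈ {F : Set α | M.IsBase F}, pS K F

/-- The `ℓ`-th symbolic power `J(M)^{(ℓ)} = ⋂_{F basis of M} p_F^ℓ` of the cover ideal. -/
noncomputable def symbPow {α : Type*} [Fintype α] (K : Type*) [Field K] (M : Matroid α)
    (ℓ : ℕ) : Ideal (MvPolynomial α K) :=
  ⨅ F ∈ {F : Set α | M.IsBase F}, (pS K F) ^ ℓ

/-- `SF_ℓ(J(M))`: the ideal generated by the squarefree monomials of `J(M)^{(ℓ)}`, i.e. by the
monomials `x_S` with `|S ∩ F| ≥ ℓ` for every basis `F` of `M`. -/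
noncomputable def SF {α : Type*} [Fintype α] (K : Type*) [Field K] (M : Matroid α)
    (ℓ : ℕ) : Ideal (MvPolynomial α K) :=
  Ideal.span {m : MvPolynomial α K |
    ∃ S : Set α, m = xS K S ∧ ∀ F : Set α, M.IsBase F → ℓ ≤ (S ∩ F).ncard}

/-- Matroid deletion: `M ⧹ D` is the restriction of `M` to `M.E \ D`. -/
def mdel {α : Type*} (M : Matroid α) (D : Set α) : Matroid α := M ↾ (M.E \ D)

/-- Matroid contraction: `M ⧸ C = (M✶ ⧹ C)✶`. -/
def mcon {α : Type*} (M : Matroid α) (C : Set α) : Matroid α := (mdel M✶ C)✶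

/-- A cocircuit of `M`: a minimal subset of the ground set meeting every basis of `M`. -/
def IsCocircuit {α : Type*} (M : Matroid α) (C : Set α) : Prop :=
  C ⊆ M.E ∧ (∀ F, M.IsBase F → (C ∩ F).Nonempty) ∧
    ∀ C' : Set α, C' ⊂ C → ∃ F, M.IsBase F ∧ C' ∩ F = ∅

section Aux

variable {α : Type*} [Fintype α]

noncomputable def indF (S : Set α) : α →₀ ℕ :=
  ∑ i ∈ S.toFinite.toFinset, Finsupp.single i 1

lemma indF_apply_mem {S : Set α} {a : α} (h : a ∈ S) : indF S a = 1 := by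
  classical
  rw [indF, Finsupp.finset_sum_apply]
  simp only [Finsupp.single_apply, Finset.sum_ite_eq', Set.Finite.mem_toFinset]
  exact if_pos h

lemma indF_apply_not_mem {S : Set α} {a : α} (h : a ∉ S) : indF S a = 0 := by
  classical
  rw [indF, Finsupp.finset_sum_apply]
  simp only [Finsupp.single_apply, Finset.sum_ite_eq', Set.Finite.mem_toFinset]
  exact if_neg h

lemma xS_eq (K : Type*) [Field K] (S : Set α) :
    xS K S = MvPolynomial.monomial (indF S) (1 : K) := by
  classical
  rw [xS, indF]
  generalize S.toFinite.toFinset = s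
  induction s using Finset.induction with
  | empty => simp
  | insert a s h ih =>
      rw [Finset.prod_insert h, Finset.sum_insert h, ih, MvPolynomial.monomial_single_add,
        pow_one]
lemma addind_ne (C : Set α) (d : α →₀ ℕ) (i : α) :
    (indF C + d) i ≠ 0 ↔ i ∈ C ∨ d i ≠ 0 := by
  rw [Finsupp.add_apply]
  by_cases h : i ∈ C
  · simp [indF_apply_mem h, h]
  · simp [indF_apply_not_mem h, h]

lemma SF_mem {K : Type*} [Field K] {M : Matroid α} {ℓ : ℕ} {p : MvPolynomial α K} :
    p ∈ SF K M ℓ ↔ ∀ d ∈ p.support, ∃ S : Set α,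
      (∀ F : Set α, M.IsBase F → ℓ ≤ (S ∩ F).ncard) ∧ indF S ≤ d := by
  have hset : {m : MvPolynomial α K |
      ∃ S : Set α, m = xS K S ∧ ∀ F : Set α, M.IsBase F → ℓ ≤ (S ∩ F).ncard} =
      (fun s => MvPolynomial.monomial s (1 : K)) ''
        {e : α →₀ ℕ | ∃ S : Set α, e = indF S ∧ ∀ F : Set α, M.IsBase F → ℓ ≤ (S ∩ F).ncard} := by
    ext m
    constructor
    · rintro ⟨S, rfl, hS⟩
      refine ⟨indF S, ⟨S, rfl, hS⟩, ?_⟩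
      exact (xS_eq K S).symm
    · rintro ⟨e, ⟨S, rfl, hS⟩, rfl⟩; exact ⟨S, by simpa using (xS_eq K S).symm, hS⟩
  rw [SF, hset, MvPolynomial.mem_ideal_span_monomial_image]
  constructor
  · intro h d hd; obtain ⟨e, ⟨S, rfl, hS⟩, hle⟩ := h d hd; exact ⟨S, hS, hle⟩
  · intro h d hd; obtain ⟨S, hS, hle⟩ := h d hd; exact ⟨indF S, ⟨S, rfl, hS⟩, hle⟩

lemma support_monomial_mul_iff {K : Type*} [Field K] (c : α →₀ ℕ) (p : MvPolynomial α K)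
    (P : (α →₀ ℕ) → Prop) :
    (∀ e ∈ (MvPolynomial.monomial c (1 : K) * p).support, P e) ↔
      ∀ d ∈ p.support, P (c + d) := by
  classical
  constructor
  · intro h d hd
    apply h
    rw [MvPolynomial.mem_support_iff, MvPolynomial.coeff_monomial_mul, one_mul]
    exact MvPolynomial.mem_support_iff.1 hd
  · intro h e he
    rw [MvPolynomial.mem_support_iff, MvPolynomial.coeff_monomial_mul'] at he
    split_ifs at he with hce
    · rw [one_mul] at he
      have hec : c + (e - c) = e := add_tsub_cancel_of_le hce
      rw [← hec]
      exact h _ (MvPolynomial.mem_support_iff.2 he)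
    · exact (he rfl).elim

lemma mem_colon_xS {K : Type*} [Field K] (I : Ideal (MvPolynomial α K)) (S : Set α)
    (p : MvPolynomial α K) :
    p ∈ Submodule.colon I (Ideal.span {xS K S}) ↔
      MvPolynomial.monomial (indF S) (1 : K) * p ∈ I := by
  have h0 : Ideal.span {xS K S} = Submodule.span (MvPolynomial α K) {xS K S} := rfl
  rw [Submodule.mem_colon, xS_eq]
  constructor
  · intro h
    have := h _ (Ideal.subset_span rfl)
    rwa [smul_eq_mul, mul_comm] at this
  · intro h s hs
    obtain ⟨a, rfl⟩ := Ideal.mem_span_singleton'.1 hs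
    have e : p • (a * MvPolynomial.monomial (indF S) (1 : K)) =
        a * (MvPolynomial.monomial (indF S) (1 : K) * p) := by rw [smul_eq_mul]; ring
    rw [e]
    exact I.mul_mem_left _ h

lemma pS_mem {K : Type*} [Field K] (S : Set α) (p : MvPolynomial α K) :
    p ∈ pS K S ↔ ∀ d ∈ p.support, ∃ i ∈ S, d i ≠ 0 :=
  MvPolynomial.mem_ideal_span_X_image

lemma coverIdeal_mem {K : Type*} [Field K] (N : Matroid α) (q : MvPolynomial α K) :
    q ∈ coverIdeal K N ↔ ∀ B, N.IsBase B → ∀ d ∈ q.support, ∃ i ∈ B, d i ≠ 0 := by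
  rw [coverIdeal]
  simp only [Ideal.mem_iInf, Set.mem_setOf_eq]
  exact forall₂_congr fun B _ => pS_mem B q

section MatroidAux

lemma base_of_indep_ncard {M : Matroid α} {I B : Set α} (hI : M.Indep I) (hB : M.IsBase B)
    (h : B.ncard ≤ I.ncard) : M.IsBase I := by
  obtain ⟨B', hB', hIB'⟩ := hI.exists_isBase_superset
  have hle : B'.ncard ≤ I.ncard := by rw [hB'.ncard_eq_ncard_of_isBase hB]; exact h
  rwa [Set.eq_of_subset_of_ncard_le hIB' hle B'.toFinite]

lemma exists_base_inter_eq {M : Matroid α} {C : Set α} (hC : _root_.IsCocircuit M C) {v : α}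
    (hv : v ∈ C) : ∃ F, M.IsBase F ∧ C ∩ F = {v} := by
  obtain ⟨F, hF, hFC⟩ := hC.2.2 (C \ {v}) (Set.sdiff_singleton_ssubset.2 hv)
  refine ⟨F, hF, ?_⟩
  have hne := hC.2.1 F hF
  have hvCF : v ∈ C ∩ F := by
    obtain ⟨y, hy⟩ := hne
    have hyv : y = v := by
      by_contra hyv
      exact absurd (show y ∈ (C \ {v}) ∩ F from ⟨⟨hy.1, hyv⟩, hy.2⟩) (by simp [hFC])
    rwa [hyv] at hy
  apply Set.Subset.antisymm
  · intro x hx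
    by_contra hxv
    exact absurd (show x ∈ (C \ {v}) ∩ F from ⟨⟨hx.1, hxv⟩, hx.2⟩) (by simp [hFC])
  · simpa using hvCF

lemma indep_insert_of_disjoint {M : Matroid α} (hE : M.E = Set.univ) {C : Set α}
    (hC : _root_.IsCocircuit M C) {v : α} (hv : v ∈ C) {I : Set α} (hI : M.Indep I)
    (hIC : I ∩ C = ∅) : M.Indep (insert v I) := by
  obtain ⟨Fv, hFv, hFvC⟩ := exists_base_inter_eq hC hv
  have hvFv : v ∈ Fv := by
    have h1 : v ∈ C ∩ Fv := by rw [hFvC]; exact rfl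
    exact h1.2
  set J := Fv \ {v} with hJdef
  have hJ : M.Indep J := hFv.indep.subset Set.diff_subset
  have hins : insert v J = Fv := by
    rw [hJdef, Set.insert_diff_singleton, Set.insert_eq_of_mem hvFv]
  have hvJ : v ∉ J := fun h => h.2 rfl
  have hvcl : v ∉ M.closure J := by
    rw [hJ.notMem_closure_iff_of_notMem hvJ (by simp [hE]), hins]
    exact hFv.indep
  have hJC : J ∩ C = ∅ := by
    apply Set.eq_empty_iff_forall_notMem.2
    rintro x ⟨hxJ, hxC⟩
    have h1 : x ∈ C ∩ Fv := ⟨hxC, hxJ.1⟩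
    rw [hFvC] at h1
    exact hxJ.2 h1
  have hsub : ∀ z, z ∉ C → z ∈ M.closure J := by
    intro z hz
    by_contra hzcl
    have hzJ : z ∉ J := fun h => hzcl (M.subset_closure J (by simp [hE]) h)
    have hzind : M.Indep (insert z J) := by
      rw [hJ.insert_indep_iff_of_notMem hzJ]
      exact ⟨by simp [hE], hzcl⟩
    have h1 : Fv.ncard = J.ncard + 1 := by
      rw [← hins, Set.ncard_insert_of_notMem hvJ]
    have hbase : M.IsBase (insert z J) := by
      apply base_of_indep_ncard hzind hFv
      rw [Set.ncard_insert_of_notMem hzJ, h1]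
    obtain ⟨y, hy⟩ := hC.2.1 _ hbase
    rcases hy.2 with rfl | hyJ
    · exact hz hy.1
    · exact absurd (show y ∈ J ∩ C from ⟨hyJ, hy.1⟩) (by simp [hJC])
  have hvI : v ∉ I := fun h => (Set.eq_empty_iff_forall_notMem.1 hIC v) ⟨h, hv⟩
  rw [hI.insert_indep_iff_of_notMem hvI]
  refine ⟨by simp [hE], fun hvclI => hvcl ?_⟩
  have h1 : I ⊆ M.closure J := fun z hz =>
    hsub z (fun hzC => (Set.eq_empty_iff_forall_notMem.1 hIC z) ⟨hz, hzC⟩)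
  have h2 : M.closure I ⊆ M.closure J := by
    calc M.closure I ⊆ M.closure (M.closure J) := M.closure_subset_closure h1
    _ = M.closure J := M.closure_closure J
  exact h2 hvclI

lemma mcon_base_iff {M : Matroid α} (hE : M.E = Set.univ) {C : Set α}
    (hC : _root_.IsCocircuit M C) {v : α} (hv : v ∈ C) {B : Set α} :
    (mcon M {v}).IsBase B ↔ v ∉ B ∧ M.IsBase (insert v B) := by
  obtain ⟨Fv, hFv, hFvC⟩ := exists_base_inter_eq hC hv
  have hvFv : v ∈ Fv := by
    have h1 : v ∈ C ∩ Fv := by rw [hFvC]; exact rfl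
    exact h1.2
  have hgr : (M✶).E = Set.univ := by rw [Matroid.dual_ground, hE]
  have hdb : M✶.IsBase (Set.univ \ Fv) := by
    have h1 := hFv.compl_isBase_dual
    rwa [hE] at h1
  have hXE : Set.univ \ ({v} : Set α) ⊆ (M✶).E := by rw [hgr]; exact Set.diff_subset
  have key : mcon M {v} = (M✶ ↾ (Set.univ \ {v}))✶ := by
    simp only [mcon, mdel, hgr]
  rw [key, Matroid.dual_isBase_iff']
  simp only [Matroid.restrict_ground_eq]
  have hrw : (M✶ ↾ (Set.univ \ {v})).IsBase ((Set.univ \ {v}) \ B) ↔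
      M✶.IsBasis ((Set.univ \ {v}) \ B) (Set.univ \ {v}) := Matroid.isBase_restrict_iff hXE
  rw [hrw]
  constructor
  · rintro ⟨h4, h3⟩
    have hvB : v ∉ B := fun h => (h3 h).2 rfl
    have h5 : (M✶).IsBase ((Set.univ \ {v}) \ B) :=
      h4.isBase_of_isBase_subset hdb (Set.diff_subset_diff_right (Set.singleton_subset_iff.2 hvFv))
    have h6 : M.IsBase (M.E \ ((Set.univ \ {v}) \ B)) := (Matroid.dual_isBase_iff'.1 h5).1
    rw [hE] at h6
    have hset : Set.univ \ ((Set.univ \ {v}) \ B) = insert v B := by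
      ext x; by_cases hx : x = v <;> simp [hx]
    rw [hset] at h6
    exact ⟨hvB, h6⟩
  · rintro ⟨hvB, hiB⟩
    have h5 : (M✶).IsBase ((Set.univ \ {v}) \ B) := by
      have h1 := hiB.compl_isBase_dual
      rw [hE] at h1
      have hset : Set.univ \ insert v B = (Set.univ \ {v}) \ B := by
        ext x
        simp only [Set.mem_diff, Set.mem_insert_iff, Set.mem_univ, true_and,
          Set.mem_singleton_iff, not_or]
      rwa [hset] at h1
    refine ⟨Matroid.IsBase.isBasis_of_subset hXE h5 Set.diff_subset, ?_⟩
    exact fun x hx => ⟨trivial, fun h => hvB (h ▸ hx)⟩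

lemma mdel_mcon_base_iff {M : Matroid α} (hE : M.E = Set.univ) {C : Set α}
    (hC : _root_.IsCocircuit M C) {v : α} (hv : v ∈ C) {B : Set α} :
    (mdel (mcon M {v}) (C \ {v})).IsBase B ↔
      v ∉ B ∧ M.IsBase (insert v B) ∧ B ∩ C = ∅ := by
  obtain ⟨Fv, hFv, hFvC⟩ := exists_base_inter_eq hC hv
  have hvFv : v ∈ Fv := by
    have h1 : v ∈ C ∩ Fv := by rw [hFvC]; exact rfl
    exact h1.2
  have hNE : (mcon M {v}).E = Set.univ \ {v} := by
    simp only [mcon, mdel, Matroid.dual_ground, Matroid.restrict_ground_eq, hE]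
  have hground : (mcon M {v}).E \ (C \ {v}) = Set.univ \ C := by
    rw [hNE]
    ext x
    simp only [Set.mem_diff, Set.mem_univ, true_and, Set.mem_singleton_iff]
    constructor
    · rintro ⟨hxv, hx⟩ hxC; exact hxv (by tauto)
    · intro hx; exact ⟨fun h => hx (h ▸ hv), fun h => hx h.1⟩
  have key : mdel (mcon M {v}) (C \ {v}) = (mcon M {v}) ↾ (Set.univ \ C) := by
    rw [mdel, hground]
  have hsub : Set.univ \ C ⊆ (mcon M {v}).E := by
    rw [hNE]
    exact Set.diff_subset_diff_right (Set.singleton_subset_iff.2 hv)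
  rw [key, Matroid.isBase_restrict_iff hsub]
  have hB0 : (mcon M {v}).IsBase (Fv \ {v}) := by
    rw [mcon_base_iff hE hC hv]
    exact ⟨fun h => h.2 rfl, by rwa [Set.insert_diff_singleton, Set.insert_eq_of_mem hvFv]⟩
  have hB0sub : Fv \ {v} ⊆ Set.univ \ C := by
    rintro x ⟨hxFv, hxv⟩
    refine ⟨trivial, fun hxC => hxv ?_⟩
    have h1 : x ∈ C ∩ Fv := ⟨hxC, hxFv⟩
    rw [hFvC] at h1
    exact h1
  constructor
  · intro h
    have hBase := h.isBase_of_isBase_subset hB0 hB0sub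
    have hsubB := h.subset
    obtain ⟨h1, h2⟩ := (mcon_base_iff hE hC hv).1 hBase
    refine ⟨h1, h2, ?_⟩
    exact Set.eq_empty_iff_forall_notMem.2 fun x hx => (hsubB hx.1).2 hx.2
  · rintro ⟨h1, h2, h3⟩
    refine Matroid.IsBase.isBasis_of_subset hsub ((mcon_base_iff hE hC hv).2 ⟨h1, h2⟩) ?_
    exact fun x hx => ⟨trivial, fun hxC => (Set.eq_empty_iff_forall_notMem.1 h3 x) ⟨hx, hxC⟩⟩

end MatroidAux

section Pointwise

lemma pointwise2 {M : Matroid α} (hE : M.E = Set.univ) {C : Set α}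
    (hC : _root_.IsCocircuit M C) {v : α} (hv : v ∈ C) (d : α →₀ ℕ) :
    (∀ B, (mcon M {v}).IsBase B → ∃ i ∈ B, i ∈ C ∨ d i ≠ 0) ↔
      (∀ B, (mdel (mcon M {v}) (C \ {v})).IsBase B → ∃ i ∈ B, d i ≠ 0) := by
  constructor
  · intro h B hB
    obtain ⟨h1, h2, h3⟩ := (mdel_mcon_base_iff hE hC hv).1 hB
    obtain ⟨i, hiB, hi⟩ := h B ((mcon_base_iff hE hC hv).2 ⟨h1, h2⟩)
    rcases hi with hiC | hid
    · exact absurd (show i ∈ B ∩ C from ⟨hiB, hiC⟩) (by simp [h3])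
    · exact ⟨i, hiB, hid⟩
  · intro h B hB
    by_cases hBC : (B ∩ C).Nonempty
    · obtain ⟨i, hi⟩ := hBC
      exact ⟨i, hi.1, Or.inl hi.2⟩
    · have h3 : B ∩ C = ∅ := Set.not_nonempty_iff_eq_empty.1 hBC
      obtain ⟨h1, h2⟩ := (mcon_base_iff hE hC hv).1 hB
      obtain ⟨i, hiB, hid⟩ := h B ((mdel_mcon_base_iff hE hC hv).2 ⟨h1, h2, h3⟩)
      exact ⟨i, hiB, Or.inr hid⟩

lemma pointwise1 {M : Matroid α} (hE : M.E = Set.univ) {C : Set α}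
    (hC : _root_.IsCocircuit M C) {v : α} (hv : v ∈ C) {ℓ : ℕ} (hℓ : 2 ≤ ℓ) (d : α →₀ ℕ) :
    (∃ S : Set α, (∀ F : Set α, M.IsBase F → ℓ ≤ (S ∩ F).ncard) ∧ indF S ≤ indF C + d) ↔
      (∃ T : Set α, (∀ F : Set α, (mdel (mcon M {v}) (C \ {v})).IsBase F →
        ℓ - 1 ≤ (T ∩ F).ncard) ∧ indF T ≤ d) := by
  constructor
  · rintro ⟨S, hScond, hSle⟩
    refine ⟨S \ C, ?_, ?_⟩
    · intro B hB
      obtain ⟨h1, h2, h3⟩ := (mdel_mcon_base_iff hE hC hv).1 hB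
      have hcard := hScond _ h2
      have hsub : S ∩ insert v B ⊆ insert v ((S \ C) ∩ B) := by
        rintro x ⟨hxS, hxiB⟩
        rcases hxiB with rfl | hxB
        · exact Set.mem_insert _ _
        · refine Set.mem_insert_of_mem _ ⟨⟨hxS, fun hxC => ?_⟩, hxB⟩
          exact (Set.eq_empty_iff_forall_notMem.1 h3 x) ⟨hxB, hxC⟩
      have hle2 : (S ∩ insert v B).ncard ≤ ((S \ C) ∩ B).ncard + 1 :=
        le_trans (Set.ncard_le_ncard hsub (Set.toFinite _)) (Set.ncard_insert_le _ _)
      omega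
    · rw [Finsupp.le_def]
      intro a
      have h1 := Finsupp.le_def.1 hSle a
      rw [Finsupp.add_apply] at h1
      by_cases haC : a ∈ C
      · rw [indF_apply_not_mem (fun h => h.2 haC)]
        exact Nat.zero_le _
      · by_cases haS : a ∈ S
        · rw [indF_apply_mem haS, indF_apply_not_mem haC] at h1
          rw [indF_apply_mem (show a ∈ S \ C from ⟨haS, haC⟩)]
          omega
        · rw [indF_apply_not_mem (fun h => haS h.1)]
          exact Nat.zero_le _
  · rintro ⟨T, hTcond, hTle⟩
    refine ⟨T ∪ C, ?_, ?_⟩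
    · intro F hF
      obtain ⟨Fv, hFv, hFvC⟩ := exists_base_inter_eq hC hv
      have hvFv : v ∈ Fv := by
        have h1 : v ∈ C ∩ Fv := by rw [hFvC]; exact rfl
        exact h1.2
      have hk : 1 ≤ (C ∩ F).ncard :=
        (Set.ncard_pos (Set.toFinite _)).2 (hC.2.1 F hF)
      set I := F \ C with hIdef
      have hIC : I ∩ C = ∅ :=
        Set.eq_empty_iff_forall_notMem.2 fun x hx => hx.1.2 hx.2
      have hI : M.Indep I := hF.indep.subset Set.diff_subset
      have hIv : M.Indep (insert v I) := indep_insert_of_disjoint hE hC hv hI hIC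
      have hsubX : insert v I ⊆ (Set.univ \ C) ∪ {v} := by
        rintro x (rfl | hx)
        · exact Or.inr rfl
        · exact Or.inl ⟨trivial, hx.2⟩
      have hXE : (Set.univ \ C) ∪ {v} ⊆ M.E := by rw [hE]; exact Set.subset_univ _
      obtain ⟨G, hGbasis, hGsup⟩ := hIv.subset_isBasis_of_subset hsubX hXE
      have hFvsub : Fv ⊆ (Set.univ \ C) ∪ {v} := by
        intro x hx
        by_cases hxv : x = v
        · exact Or.inr (by simp [hxv])
        · refine Or.inl ⟨trivial, fun hxC => hxv ?_⟩
          have h1 : x ∈ C ∩ Fv := ⟨hxC, hx⟩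
          rw [hFvC] at h1
          exact h1
      have hG : M.IsBase G := hGbasis.isBase_of_isBase_subset hFv hFvsub
      have hvG : v ∈ G := hGsup (Set.mem_insert v I)
      have hGC : G ∩ C ⊆ {v} := by
        rintro x ⟨hxG, hxC⟩
        rcases hGbasis.subset hxG with h | h
        · exact absurd hxC h.2
        · exact h
      set B := G \ {v} with hBdef
      have hBbase : (mdel (mcon M {v}) (C \ {v})).IsBase B := by
        rw [mdel_mcon_base_iff hE hC hv]
        refine ⟨fun h => h.2 rfl, ?_, ?_⟩
        · rwa [hBdef, Set.insert_diff_singleton, Set.insert_eq_of_mem hvG]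
        · exact Set.eq_empty_iff_forall_notMem.2 fun x hx => hx.1.2 (hGC ⟨hx.1.1, hx.2⟩)
      have hIB : I ⊆ B := fun x hx =>
        ⟨hGsup (Set.mem_insert_of_mem _ hx), fun hxv => hx.2 (hxv ▸ hv)⟩
      have e1 : G.ncard = F.ncard := hG.ncard_eq_ncard_of_isBase hF
      have e2 : B.ncard + 1 = G.ncard := Set.ncard_diff_singleton_add_one hvG
      have e3 : (F ∩ C).ncard + (F \ C).ncard = F.ncard :=
        Set.ncard_inter_add_ncard_diff_eq_ncard F C
      rw [← hIdef] at e3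
      have e4 : (B \ I).ncard = B.ncard - I.ncard := Set.ncard_diff hIB
      have e5 : I.ncard ≤ B.ncard := Set.ncard_le_ncard hIB (Set.toFinite _)
      have e6 : (C ∩ F).ncard = (F ∩ C).ncard := by rw [Set.inter_comm]
      have h7 : ℓ - 1 ≤ (T ∩ B).ncard := hTcond B hBbase
      have h8 : (T ∩ B).ncard ≤ (T ∩ I).ncard + (B \ I).ncard := by
        refine le_trans (Set.ncard_le_ncard ?_ (Set.toFinite _)) (Set.ncard_union_le _ _)
        rintro x ⟨hxT, hxB⟩
        by_cases hxI : x ∈ I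
        · exact Or.inl ⟨hxT, hxI⟩
        · exact Or.inr ⟨hxB, hxI⟩
      have h9 : (T ∩ I).ncard + (C ∩ F).ncard ≤ ((T ∪ C) ∩ F).ncard := by
        rw [← Set.ncard_union_eq
          (Set.disjoint_left.2 fun x hx hx2 => hx.2.2 hx2.1)
          (Set.toFinite _) (Set.toFinite _)]
        refine Set.ncard_le_ncard ?_ (Set.toFinite _)
        rintro x (⟨hxT, hxI⟩ | ⟨hxC, hxF⟩)
        · exact ⟨Or.inl hxT, hxI.1⟩
        · exact ⟨Or.inr hxC, hxF⟩
      omega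
    · rw [Finsupp.le_def]
      intro a
      have h1 := Finsupp.le_def.1 hTle a
      rw [Finsupp.add_apply]
      by_cases haC : a ∈ C
      · rw [indF_apply_mem (Set.mem_union_right _ haC), indF_apply_mem haC]
        omega
      · rw [indF_apply_not_mem haC]
        by_cases haT : a ∈ T
        · rw [indF_apply_mem (Set.mem_union_left _ haT)]
          rw [indF_apply_mem haT] at h1
          omega
        · rw [indF_apply_not_mem (fun h => h.elim haT haC)]
          exact Nat.zero_le _

end Pointwise

end Aux

/-- let `C` be a cocircuit of `M`, `v ∈ C`, and `ℓ ≥ 2`. Then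
`SF_ℓ(J(M)) : x_C = SF_{ℓ−1}(J(M ⧸ {v}) : x_C) = SF_{ℓ−1}(J((M ⧸ {v}) ⧹ (C \ {v})))`,
where the middle and right terms agree because `J(M ⧸ {v}) : x_C = J((M ⧸ {v}) ⧹ (C \ {v}))`. -/
theorem stmt14 {α : Type*} [Fintype α] (K : Type*) [Field K]
    (M : Matroid α) (hE : M.E = Set.univ)
    (C : Set α) (hC : _root_.IsCocircuit M C) (v : α) (hv : v ∈ C)
    (ℓ : ℕ) (hℓ : 2 ≤ ℓ) :
    Submodule.colon (SF K M ℓ) (Ideal.span {xS K C}) =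
      SF K (mdel (mcon M {v}) (C \ {v})) (ℓ - 1) ∧
    Submodule.colon (coverIdeal K (mcon M {v})) (Ideal.span {xS K C}) =
      coverIdeal K (mdel (mcon M {v}) (C \ {v})) := by
  constructor
  · apply Submodule.ext
    intro p
    rw [mem_colon_xS, SF_mem, support_monomial_mul_iff, SF_mem]
    exact forall₂_congr fun d _ => pointwise1 hE hC hv hℓ d
  · apply Submodule.ext
    intro p
    rw [mem_colon_xS, coverIdeal_mem, coverIdeal_mem]
    constructor
    · intro h B hB d hd
      have h' : ∀ B', (mcon M {v}).IsBase B' → ∃ i ∈ B', i ∈ C ∨ d i ≠ 0 := by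
        intro B' hB'
        obtain ⟨i, hi1, hi2⟩ :=
          (support_monomial_mul_iff (indF C) p (fun e => ∃ i ∈ B', e i ≠ 0)).1 (h B' hB') d hd
        exact ⟨i, hi1, (addind_ne C d i).1 hi2⟩
      exact (pointwise2 hE hC hv d).1 h' B hB
    · intro h B hB
      rw [support_monomial_mul_iff]
      intro d hd
      obtain ⟨i, hi1, hi2⟩ :=
        (pointwise2 hE hC hv d).2 (fun B' hB' => h B' hB' d hd) B hB
      exact ⟨i, hi1, (addind_ne C d i).2 hi2⟩
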